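/- Let Δⁿ be the unit polydisk and ξ ∈ ∂Δⁿ. Then the intersection Ch(ξ) of the closed polydisk with all complex supporting hyperplanes at ξ equals ⋂_{j : |ξ_j| = 1} {η ∈ closure(Δⁿ) : η_j = ξ_j}. -/

import Mathlib

open Finset

/-- In the unit polydisk `Δⁿ`, for every boundary point `ξ`, the set `Ch(ξ)`
(intersection of the closed polydisk with all complex supporting hyperplanes
at `ξ`) equals `⋂_{j : |ξ_j|=1} {η ∈ closure Δⁿ : η_j = ξ_j}`. -/
theorem polydisk_Ch_eq {n : ℕ} (hn : 0 < n) {ξ : Fin n → ℂ}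
    (hξ : ξ ∈ frontier {z : Fin n → ℂ | ‖z‖ < 1}) :
    (closure {z : Fin n → ℂ | ‖z‖ < 1} ∩
      ⋂ σ ∈ {σ : (Fin n → ℂ) →ₗ[ℂ] ℂ |
          ∀ z ∈ {z : Fin n → ℂ | ‖z‖ < 1}, (σ z).re < (σ ξ).re},
        {y : Fin n → ℂ | y - ξ ∈ LinearMap.ker σ}) =
      ⋂ j ∈ {j : Fin n | ‖ξ j‖ = 1},
        {η ∈ closure {z : Fin n → ℂ | ‖z‖ < 1} | η j = ξ j} := by
  have : Nonempty (Fin n) := ⟨⟨0, hn⟩⟩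
  have hball : {z : Fin n → ℂ | ‖z‖ < 1} = Metric.ball 0 1 := by
    ext z; simp [Metric.mem_ball, dist_zero_right]
  have hξ1 : ‖ξ‖ = 1 := by
    rw [hball, frontier_ball 0 one_ne_zero] at hξ
    simpa using hξ
  have hξle : ∀ j, ‖ξ j‖ ≤ 1 := fun j => by
    have := norm_le_pi_norm ξ j
    rw [hξ1] at this; simpa using this
  obtain ⟨j0, hj0⟩ : ∃ j, ‖ξ j‖ = 1 := by
    by_contra h
    push_neg at h
    have : ‖ξ‖ < 1 := by
      refine (pi_norm_lt_iff one_pos).2 fun j => ?_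
      exact lt_of_le_of_ne (hξle j) (h j)
    exact absurd hξ1 (ne_of_lt this)
  ext η
  simp only [Set.mem_inter_iff, Set.mem_iInter, Set.mem_setOf_eq, Set.mem_sep_iff,
    LinearMap.mem_ker]
  constructor
  · rintro ⟨hη, hσ⟩ j hj
    refine ⟨hη, ?_⟩
    set σ : (Fin n → ℂ) →ₗ[ℂ] ℂ := (starRingEnd ℂ (ξ j)) • LinearMap.proj j with hσdef
    have hσapp : ∀ x : Fin n → ℂ, σ x = (starRingEnd ℂ (ξ j)) * x j := fun x => rfl
    have hsupp : ∀ z : Fin n → ℂ, ‖z‖ < 1 → (σ z).re < (σ ξ).re := by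
      intro z hz
      have h1 : (σ z).re ≤ ‖z j‖ := by
        rw [hσapp]
        calc ((starRingEnd ℂ (ξ j)) * z j).re ≤ ‖(starRingEnd ℂ (ξ j)) * z j‖ :=
              Complex.re_le_norm _
          _ = ‖ξ j‖ * ‖z j‖ := by simp [map_mul]
          _ ≤ ‖z j‖ := by
              nlinarith [hξle j, norm_nonneg (z j), norm_nonneg (ξ j)]
      have h2 : ‖z j‖ < 1 := by
        have := norm_le_pi_norm z j
        linarith
      have h3 : (σ ξ).re = 1 := by
        rw [hσapp, mul_comm, Complex.mul_conj]
        simp [Complex.normSq_eq_norm_sq, hj]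
      linarith
    have hker := hσ σ hsupp
    rw [hσapp] at hker
    have hξj : (starRingEnd ℂ (ξ j)) ≠ 0 := by
      simp only [ne_eq, map_eq_zero]
      intro h0
      rw [h0] at hj; simp at hj
    have := mul_eq_zero.1 hker
    rcases this with h | h
    · exact absurd h hξj
    · exact sub_eq_zero.1 h
  · intro hη
    have hηcl : η ∈ closure {z : Fin n → ℂ | ‖z‖ < 1} := (hη j0 hj0).1
    refine ⟨hηcl, ?_⟩
    intro σ hσsupp
    set a : Fin n → ℂ := fun i => σ fun k => if i = k then 1 else 0 with ha
    have hsum : ∀ x : Fin n → ℂ, σ x = ∑ i, x i * a i := by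
      intro x
      rw [LinearMap.pi_apply_eq_sum_univ σ x]
      simp [ha, smul_eq_mul]
    set R : ℝ := (σ ξ).re with hR
    set s : ℝ := ∑ i, ‖a i‖ with hs
    have hs0 : 0 ≤ s := Finset.sum_nonneg fun i _ => norm_nonneg _
    have hrs : ∀ r : ℝ, 0 ≤ r → r < 1 → r * s < R := by
      intro r hr0 hr1
      set z : Fin n → ℂ := fun i =>
        (r : ℂ) * (if a i = 0 then 0 else (starRingEnd ℂ (a i)) / (‖a i‖ : ℂ)) with hz
      have hznorm : ‖z‖ < 1 := by
        refine (pi_norm_lt_iff one_pos).2 fun i => ?_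
        rw [hz]
        simp only
        by_cases h : a i = 0
        · simp [h]
        · rw [if_neg h]
          rw [norm_mul, norm_div]
          have habs : ‖a i‖ ≠ 0 := by simpa using h
          simp only [Complex.norm_conj, Complex.norm_real, Real.norm_eq_abs,
            abs_of_nonneg (norm_nonneg (a i))]
          rw [div_self habs]
          simpa [Complex.norm_real, abs_of_nonneg hr0] using hr1
      have hσz : (σ z).re = r * s := by
        rw [hsum z]
        have : ∑ i, z i * a i = ((r * s : ℝ) : ℂ) := by
          rw [hs]
          push_cast
          rw [Finset.mul_sum]
          refine Finset.sum_congr rfl fun i _ => ?_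
          rw [hz]
          simp only
          by_cases h : a i = 0
          · simp [h]
          · rw [if_neg h]
            have habs : (‖a i‖ : ℂ) ≠ 0 := by simpa using h
            field_simp
            rw [mul_assoc, mul_comm ((starRingEnd ℂ) (a i)) (a i), Complex.mul_conj,
              Complex.normSq_eq_norm_sq]
            push_cast
            ring
        rw [this, Complex.ofReal_re]
      have := hσsupp z hznorm
      rw [hσz] at this
      exact this
    have hRpos : 0 < R := by
      have := hrs 0 le_rfl one_pos
      simpa using this
    have hsR : s ≤ R := by
      by_contra h
      push_neg at h
      have hspos : 0 < s := lt_trans hRpos h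
      have h1 : (R / s) * s < R := hrs (R / s) (le_of_lt (div_pos hRpos hspos))
        ((div_lt_one hspos).2 h)
      rw [div_mul_cancel₀ _ (ne_of_gt hspos)] at h1
      exact lt_irrefl R h1
    have hterm : ∀ i, (ξ i * a i).re ≤ ‖a i‖ := by
      intro i
      calc (ξ i * a i).re ≤ ‖ξ i * a i‖ := Complex.re_le_norm _
        _ = ‖ξ i‖ * ‖a i‖ := norm_mul _ _
        _ ≤ ‖a i‖ := by
            nlinarith [hξle i, norm_nonneg (a i), norm_nonneg (ξ i)]
    have hRsum : R = ∑ i, (ξ i * a i).re := by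
      rw [hR, hsum ξ, Complex.re_sum]
    have hRles : R ≤ s := by
      rw [hRsum, hs]
      exact Finset.sum_le_sum fun i _ => hterm i
    have hReq : R = s := le_antisymm hRles hsR
    have heach : ∀ i ∈ Finset.univ, (ξ i * a i).re = ‖a i‖ := by
      refine (Finset.sum_eq_sum_iff_of_le fun i _ => hterm i).1 ?_
      rw [← hRsum, ← hs, hReq]
    rw [hsum]
    refine Finset.sum_eq_zero fun i _ => ?_
    by_cases h : a i = 0
    · simp [h]
    · have habspos : 0 < ‖a i‖ := by simpa [norm_pos_iff] using h
      have h1 : ‖a i‖ ≤ ‖ξ i‖ * ‖a i‖ := by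
        have := Complex.re_le_norm (ξ i * a i)
        rw [heach i (Finset.mem_univ i), norm_mul] at this
        exact this
      have h2 : 1 ≤ ‖ξ i‖ := by
        by_contra hc
        push_neg at hc
        nlinarith
      have h3 : ‖ξ i‖ = 1 := le_antisymm (hξle i) h2
      have h4 : η i = ξ i := (hη i h3).2
      simp [Pi.sub_apply, h4]
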